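/- For all n ≥ 0, ∑_{k=0}^{n} C(n,k) w_k(y) = ((1+y)/y) · w_n(y) for n > 0, i.e., y · ∑_{k=0}^{n} C(n,k) w_k(y) = (1+y) · w_n(y) as polynomials. -/

import Mathlib

def stirling2 : ℕ → ℕ → ℕ
  | 0, 0 => 1
  | 0, _ + 1 => 0
  | _ + 1, 0 => 0
  | n + 1, k + 1 => (k + 1) * stirling2 n (k + 1) + stirling2 n k

lemma stirling2_eq_zero_of_lt : ∀ n k, n < k → stirling2 n k = 0 := by
  intro n
  induction n with
  | zero => intro k hk; cases k with
    | zero => omega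
    | succ k => rfl
  | succ n ih =>
    intro k hk
    cases k with
    | zero => omega
    | succ k =>
      simp [stirling2, ih k (by omega), ih (k+1) (by omega)]

lemma key (n : ℕ) : ∀ m, ∑ k ∈ Finset.range (n+1),
    n.choose k * stirling2 k m = stirling2 (n+1) (m+1) := by
  induction n with
  | zero => intro m; simp [stirling2]
  | succ n ih =>
    intro m
    rw [Finset.sum_range_succ']
    simp only [Nat.choose_succ_succ, add_mul, Finset.sum_add_distrib]
    have hB : (∑ k ∈ Finset.range (n+1), n.choose (k+1) * stirling2 (k+1) m)
        + Nat.choose (n+1) 0 * stirling2 0 m = stirling2 (n+1) (m+1) := by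
      rw [show Nat.choose (n+1) 0 * stirling2 0 m = n.choose 0 * stirling2 0 m by simp]
      rw [← Finset.sum_range_succ' (fun k => n.choose k * stirling2 k m) (n+1)]
      rw [Finset.sum_range_succ, Nat.choose_succ_self]
      simpa using ih m
    have hA : (∑ k ∈ Finset.range (n+1), n.choose k * stirling2 (k+1) m)
        + stirling2 (n+1) (m+1) = stirling2 (n+1+1) (m+1) := by
      cases m with
      | zero =>
        simp only [show ∀ k, stirling2 (k+1) 0 = 0 from fun k => rfl, Nat.mul_zero,
          Finset.sum_const_zero, Nat.zero_add]
        rw [show stirling2 (n+2) 1 = 1 * stirling2 (n+1) 1 + stirling2 (n+1) 0 from rfl]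
        simp [show stirling2 (n+1) 0 = 0 from rfl]
      | succ m =>
        have h2 : ∑ k ∈ Finset.range (n+1), n.choose k * stirling2 (k+1) (m+1)
            = (m+1) * stirling2 (n+1) (m+2) + stirling2 (n+1) (m+1) := by
          calc ∑ k ∈ Finset.range (n+1), n.choose k * stirling2 (k+1) (m+1)
              = ∑ k ∈ Finset.range (n+1),
                ((m+1) * (n.choose k * stirling2 k (m+1)) + n.choose k * stirling2 k m) :=
                Finset.sum_congr rfl (fun k _ => by
                  rw [show stirling2 (k+1) (m+1)
                    = (m+1) * stirling2 k (m+1) + stirling2 k m from rfl]; ring)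
            _ = (m+1) * ∑ k ∈ Finset.range (n+1), n.choose k * stirling2 k (m+1)
                + ∑ k ∈ Finset.range (n+1), n.choose k * stirling2 k m := by
                rw [Finset.sum_add_distrib, Finset.mul_sum]
            _ = _ := by rw [ih, ih]
        rw [h2, show stirling2 (n+2) (m+2) =
          (m+2) * stirling2 (n+1) (m+2) + stirling2 (n+1) (m+1) from rfl]
        ring
    simp only [Nat.succ_eq_add_one] at *
    omega

/-- The geometric polynomials `w_n(y) = ∑_{k=0}^n S(n,k)·k!·y^k`. -/
def geomPoly (n : ℕ) (y : ℝ) : ℝ :=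
  ∑ k ∈ Finset.range (n + 1), (stirling2 n k : ℝ) * (Nat.factorial k : ℝ) * y ^ k

theorem sum_choose_geomPoly (n : ℕ) (hn : 0 < n) (y : ℝ) :
    y * ∑ k ∈ Finset.range (n + 1), (n.choose k : ℝ) * geomPoly k y
      = (1 + y) * geomPoly n y := by
  have hS0 : stirling2 n 0 = 0 := by
    cases n with
    | zero => omega
    | succ n => rfl
  have hgeom : ∀ k ∈ Finset.range (n + 1), (n.choose k : ℝ) * geomPoly k y
      = ∑ m ∈ Finset.range (n + 1),
        (n.choose k : ℝ) * ((stirling2 k m : ℝ) * (Nat.factorial m : ℝ) * y ^ m) := by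
    intro k hk
    rw [geomPoly, Finset.mul_sum]
    refine Finset.sum_subset (Finset.range_subset_range.mpr (by
      simp only [Finset.mem_range] at hk; omega)) ?_
    intro m hm hms
    simp only [Finset.mem_range, not_lt] at hm hms
    rw [stirling2_eq_zero_of_lt k m (by omega)]
    simp
  have step1 : y * ∑ k ∈ Finset.range (n + 1), (n.choose k : ℝ) * geomPoly k y
      = ∑ m ∈ Finset.range (n + 1),
        (stirling2 (n + 1) (m + 1) : ℝ) * (Nat.factorial m : ℝ) * y ^ (m + 1) := by
    rw [Finset.sum_congr rfl hgeom, Finset.sum_comm, Finset.mul_sum]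
    refine Finset.sum_congr rfl fun m _ => ?_
    rw [← key n m]
    push_cast
    rw [Finset.sum_mul, Finset.mul_sum, Finset.sum_mul]
    exact Finset.sum_congr rfl fun k _ => by ring
  have step2 : ∑ m ∈ Finset.range (n + 1),
        (stirling2 (n + 1) (m + 1) : ℝ) * (Nat.factorial m : ℝ) * y ^ (m + 1)
      = geomPoly n y + y * geomPoly n y := by
    have hsplit : ∀ m, ((stirling2 (n + 1) (m + 1) : ℕ) : ℝ)
        * (Nat.factorial m : ℝ) * y ^ (m + 1)
        = (stirling2 n (m + 1) : ℝ) * (Nat.factorial (m + 1) : ℝ) * y ^ (m + 1)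
          + y * ((stirling2 n m : ℝ) * (Nat.factorial m : ℝ) * y ^ m) := by
      intro m
      rw [show stirling2 (n + 1) (m + 1)
        = (m + 1) * stirling2 n (m + 1) + stirling2 n m from rfl, Nat.factorial_succ]
      push_cast
      ring
    rw [Finset.sum_congr rfl fun m _ => hsplit m, Finset.sum_add_distrib]
    congr 1
    · have e1 := Finset.sum_range_succ' (fun m => (stirling2 n m : ℝ)
          * (Nat.factorial m : ℝ) * y ^ m) (n + 1)
      rw [Finset.sum_range_succ] at e1
      simp only [stirling2_eq_zero_of_lt n (n + 1) (by omega), hS0, Nat.cast_zero,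
        zero_mul, add_zero, pow_zero, mul_one] at e1
      rw [geomPoly, ← e1]
    · rw [geomPoly, Finset.mul_sum]
  rw [step1, step2, geomPoly]
  ring
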